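/- Let Ψ be a convex differentiable function on (0,∞) with Ψ(0+)=0, negative on (0,ρ), and let v : ℝ × (0,ρ) → (0,ρ) be the flow satisfying ∂/∂λ v_t(λ) = Ψ(v_t(λ))/Ψ(λ). Assume Ψ'(0+) := lim_{u→0+} Ψ(u)/u exists in [-∞, 0) and v_{-t}(λ) → 0 as t → +∞ for each λ ∈ (0,ρ). Then for any λ, λ' ∈ (0,ρ), v_{-t}(λ)/v_{-t}(λ') → exp(Ψ'(0+) ∫_{λ'}^{λ} du/Ψ(u)) as t → +∞; in particular, if Ψ'(0+) = -∞ and λ < λ', then v_{-t}(λ)/v_{-t}(λ') → 0. -/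

import Mathlib

open MeasureTheory Real Filter

/-- Asymptotic ratio of the inverse cumulant flow in the supercritical case:
`v_{-t}(λ)/v_{-t}(λ') → exp(Ψ'(0+)·∫_{λ'}^{λ} du/Ψ(u))`, with the convention
that the limit is `0` (resp. `+∞`) when `Ψ'(0+) = -∞` and `λ < λ'` (resp. `λ' < λ`). -/
theorem inverse_flow_ratio_supercritical (Ψ : ℝ → ℝ) (ρ : EReal) (hρ : 0 < ρ)
    (S : Set ℝ) (hS : S = {y : ℝ | 0 < y ∧ (y : EReal) < ρ})
    (hconv : ConvexOn ℝ (Set.Ioi 0) Ψ)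
    (hdiff : DifferentiableOn ℝ Ψ (Set.Ioi 0))
    (hΨ0 : Tendsto Ψ (nhdsWithin 0 (Set.Ioi 0)) (nhds 0))
    (hneg : ∀ y ∈ S, Ψ y < 0)
    (v : ℝ → ℝ → ℝ)
    (hvmem : ∀ t : ℝ, ∀ l ∈ S, v t l ∈ S)
    (hvderiv : ∀ t : ℝ, ∀ l ∈ S, HasDerivAt (fun x => v t x) (Ψ (v t l) / Ψ l) l)
    (hv0 : ∀ l ∈ S, Tendsto (fun t : ℝ => v (-t) l) atTop (nhds 0))
    (ψ0 : EReal)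
    (hψ0 : Tendsto (fun u : ℝ => ((Ψ u / u : ℝ) : EReal))
      (nhdsWithin 0 (Set.Ioi 0)) (nhds ψ0))
    (hψ0neg : ψ0 < 0) :
    (∀ l ∈ S, ∀ l' ∈ S, ψ0 ≠ ⊥ →
      Tendsto (fun t : ℝ => v (-t) l / v (-t) l') atTop
        (nhds (Real.exp (ψ0.toReal * ∫ u in l'..l, 1 / Ψ u)))) ∧
    (ψ0 = ⊥ → ∀ l ∈ S, ∀ l' ∈ S, l < l' →
      Tendsto (fun t : ℝ => v (-t) l / v (-t) l') atTop (nhds 0)) ∧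
    (ψ0 = ⊥ → ∀ l ∈ S, ∀ l' ∈ S, l' < l →
      Tendsto (fun t : ℝ => v (-t) l / v (-t) l') atTop atTop) := by
  -- basic facts about S
  have hSpos : ∀ y ∈ S, (0:ℝ) < y := fun y hy => by rw [hS] at hy; exact hy.1
  have hSsub : ∀ {a b : ℝ}, a ∈ S → b ∈ S → Set.uIcc a b ⊆ S := by
    intro a b ha hb x hx
    rw [hS] at ha hb ⊢
    rcases Set.mem_uIcc.mp hx with ⟨h1, h2⟩ | ⟨h1, h2⟩
    · exact ⟨ha.1.trans_le h1, lt_of_le_of_lt (EReal.coe_le_coe_iff.mpr h2) hb.2⟩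
    · exact ⟨hb.1.trans_le h1, lt_of_le_of_lt (EReal.coe_le_coe_iff.mpr h2) ha.2⟩
  have hΨcontAt : ∀ {y : ℝ}, 0 < y → ContinuousAt Ψ y := fun {y} hy =>
    hdiff.continuousOn.continuousAt (isOpen_Ioi.mem_nhds hy)
  have hvpos : ∀ t : ℝ, ∀ l ∈ S, 0 < v t l := fun t l hl => hSpos _ (hvmem t l hl)
  have hΨvneg : ∀ t : ℝ, ∀ l ∈ S, Ψ (v t l) < 0 := fun t l hl => hneg _ (hvmem t l hl)
  -- continuity of the integrand
  have hcontF : ∀ t : ℝ, ∀ x ∈ S,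
      ContinuousAt (fun u => Ψ (v (-t) u) / v (-t) u * (1 / Ψ u)) x := by
    intro t x hx
    have hvc : ContinuousAt (fun u => v (-t) u) x := (hvderiv (-t) x hx).continuousAt
    have h1 : ContinuousAt (fun u => Ψ (v (-t) u)) x :=
      (hΨcontAt (hvpos (-t) x hx)).comp hvc
    exact (h1.div hvc (ne_of_gt (hvpos (-t) x hx))).mul
      (continuousAt_const.div (hΨcontAt (hSpos x hx)) (ne_of_lt (hneg x hx)))
  have hconth : ∀ x ∈ S, ContinuousAt (fun u => 1 / Ψ u) x := fun x hx =>
    continuousAt_const.div (hΨcontAt (hSpos x hx)) (ne_of_lt (hneg x hx))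
  have hintF : ∀ t : ℝ, ∀ a ∈ S, ∀ b ∈ S,
      IntervalIntegrable (fun u => Ψ (v (-t) u) / v (-t) u * (1 / Ψ u)) volume a b :=
    fun t a ha b hb => ContinuousOn.intervalIntegrable
      (fun x hx => (hcontF t x (hSsub ha hb hx)).continuousWithinAt)
  have hinth : ∀ a ∈ S, ∀ b ∈ S, IntervalIntegrable (fun u => 1 / Ψ u) volume a b :=
    fun a ha b hb => ContinuousOn.intervalIntegrable
      (fun x hx => (hconth x (hSsub ha hb hx)).continuousWithinAt)
  -- the key identity : ratio = exp of an integral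
  have key : ∀ t : ℝ, ∀ l ∈ S, ∀ l' ∈ S,
      v (-t) l / v (-t) l' =
        Real.exp (∫ u in l'..l, Ψ (v (-t) u) / v (-t) u * (1 / Ψ u)) := by
    intro t l hl l' hl'
    have hft : ∀ x ∈ Set.uIcc l' l, HasDerivAt (fun y => Real.log (v (-t) y))
        (Ψ (v (-t) x) / v (-t) x * (1 / Ψ x)) x := by
      intro x hx
      have hxS := hSsub hl' hl hx
      have h := (hvderiv (-t) x hxS).log (ne_of_gt (hvpos (-t) x hxS))
      convert h using 1
      field_simp
    have h := intervalIntegral.integral_eq_sub_of_hasDerivAt hft (hintF t l' hl' l hl)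
    rw [h, Real.exp_sub, Real.exp_log (hvpos (-t) l hl), Real.exp_log (hvpos (-t) l' hl')]
  -- monotonicity of the slope w ↦ Ψ w / w
  have gmono : ∀ {w1 w2 : ℝ}, 0 < w1 → w1 ≤ w2 → Ψ w1 / w1 ≤ Ψ w2 / w2 := by
    intro w1 w2 h1 h12
    rcases eq_or_lt_of_le h12 with rfl | hlt
    · exact le_refl _
    · have h2 : 0 < w2 := h1.trans hlt
      have hs : Ψ w1 / w1 ≤ (Ψ w2 - Ψ w1) / (w2 - w1) := by
        have htend : Tendsto (fun e => (Ψ w1 - Ψ e) / (w1 - e)) (nhdsWithin 0 (Set.Ioi 0))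
            (nhds (Ψ w1 / w1)) := by
          have hnum : Tendsto (fun e => Ψ w1 - Ψ e) (nhdsWithin 0 (Set.Ioi 0))
              (nhds (Ψ w1 - 0)) := tendsto_const_nhds.sub hΨ0
          have hden : Tendsto (fun e : ℝ => w1 - e) (nhdsWithin 0 (Set.Ioi 0))
              (nhds (w1 - 0)) :=
            tendsto_const_nhds.sub (tendsto_id.mono_left nhdsWithin_le_nhds)
          have := hnum.div hden (by simpa using ne_of_gt h1)
          simp only [sub_zero] at this
          exact this
        refine le_of_tendsto htend ?_
        filter_upwards [Ioo_mem_nhdsGT_of_mem ⟨le_refl (0:ℝ), h1⟩] with e he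
        exact hconv.slope_mono_adjacent he.1 h2 he.2 hlt
      rw [div_le_div_iff₀ h1 (sub_pos.mpr hlt)] at hs
      rw [div_le_div_iff₀ h1 h2]
      nlinarith
  -- v (-t) tends to 0 within (0,∞)
  have hcomp : ∀ l ∈ S, Tendsto (fun t : ℝ => v (-t) l) atTop (nhdsWithin 0 (Set.Ioi 0)) := by
    intro l hl
    exact tendsto_nhdsWithin_iff.mpr
      ⟨hv0 l hl, Eventually.of_forall fun t => hvpos (-t) l hl⟩
  -- v t is monotone on S
  have hvmono : ∀ t : ℝ, ∀ a ∈ S, ∀ b ∈ S, a ≤ b → v t a ≤ v t b := by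
    intro t a ha b hb hab
    rcases eq_or_lt_of_le hab with rfl | hlt
    · exact le_refl _
    · have hsub : Set.Icc a b ⊆ S := by
        intro x hx
        exact hSsub ha hb (by rw [Set.uIcc_of_le hab]; exact hx)
      have hsm : StrictMonoOn (fun x => v t x) (Set.Icc a b) := by
        apply strictMonoOn_of_deriv_pos (convex_Icc a b)
        · exact fun x hx => ((hvderiv t x (hsub hx)).continuousAt).continuousWithinAt
        · intro x hx
          rw [interior_Icc] at hx
          have hxS := hsub (Set.Ioo_subset_Icc_self hx)
          rw [(hvderiv t x hxS).deriv]
          exact div_pos_of_neg_of_neg (hΨvneg t x hxS) (hneg x hxS)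
      exact (hsm (Set.left_mem_Icc.mpr hab) (Set.right_mem_Icc.mpr hab) hlt).le
  -- the -∞ case : real-valued divergence
  have hbotreal : ψ0 = ⊥ → ∀ l ∈ S,
      Tendsto (fun t : ℝ => Ψ (v (-t) l) / v (-t) l) atTop atBot := by
    intro hb l hl
    have h := EReal.tendsto_nhds_bot_iff_real.mp (hb ▸ hψ0)
    refine tendsto_atBot.mpr fun b => ?_
    exact ((hcomp l hl).eventually (h b)).mono fun t ht =>
      (EReal.coe_lt_coe_iff.mp ht).le
  refine ⟨?_, ?_, ?_⟩
  · -- finite case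
    intro l hl l' hl' hbot
    have htop : ψ0 ≠ ⊤ := ne_top_of_lt hψ0neg
    set c := ψ0.toReal with hc
    have hcoe : ψ0 = (c : EReal) := (EReal.coe_toReal htop hbot).symm
    have hgreal : Tendsto (fun u : ℝ => Ψ u / u) (nhdsWithin 0 (Set.Ioi 0)) (nhds c) := by
      rw [hcoe] at hψ0; exact EReal.tendsto_coe.mp hψ0
    have hclb : ∀ w : ℝ, 0 < w → c ≤ Ψ w / w := by
      intro w hw
      refine le_of_tendsto hgreal ?_
      filter_upwards [Ioo_mem_nhdsGT_of_mem ⟨le_refl (0:ℝ), hw⟩] with e he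
      exact gmono he.1 he.2.le
    set M := max l l' with hM
    have hMS : M ∈ S := by rcases max_choice l l' with h | h <;> rw [hM, h] <;> assumption
    have hgM : Tendsto (fun t : ℝ => Ψ (v (-t) M) / v (-t) M) atTop (nhds c) :=
      hgreal.comp (hcomp M hMS)
    obtain ⟨B, hB⟩ := (isCompact_uIcc (a := l') (b := l)).exists_bound_of_continuousOn
      (fun x hx => (hconth x (hSsub hl' hl hx)).continuousWithinAt)
    set J := ∫ u in l'..l, 1 / Ψ u with hJ
    have hest : ∀ t : ℝ, |(∫ u in l'..l, Ψ (v (-t) u) / v (-t) u * (1 / Ψ u)) - c * J| ≤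
        (Ψ (v (-t) M) / v (-t) M - c) * B * |l - l'| := by
      intro t
      have hsplit : (∫ u in l'..l, Ψ (v (-t) u) / v (-t) u * (1 / Ψ u)) - c * J =
          ∫ u in l'..l, (Ψ (v (-t) u) / v (-t) u - c) * (1 / Ψ u) := by
        rw [hJ, ← intervalIntegral.integral_const_mul,
          ← intervalIntegral.integral_sub (hintF t l' hl' l hl) ((hinth l' hl' l hl).const_mul c)]
        simp only [sub_mul]
      rw [hsplit, ← Real.norm_eq_abs]
      apply intervalIntegral.norm_integral_le_of_norm_le_const
      intro x hx
      have hx' : x ∈ Set.uIcc l' l := Set.uIoc_subset_uIcc hx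
      have hxS : x ∈ S := hSsub hl' hl hx'
      have hxM : x ≤ M := by
        rcases Set.mem_uIcc.mp hx' with ⟨_, h2⟩ | ⟨_, h2⟩
        · exact le_sup_of_le_left h2
        · exact le_sup_of_le_right h2
      have h2 : v (-t) x ≤ v (-t) M := hvmono (-t) x hxS M hMS hxM
      have h3 : c ≤ Ψ (v (-t) x) / v (-t) x := hclb _ (hvpos (-t) x hxS)
      have h4 : Ψ (v (-t) x) / v (-t) x ≤ Ψ (v (-t) M) / v (-t) M :=
        gmono (hvpos (-t) x hxS) h2
      rw [norm_mul]
      refine mul_le_mul ?_ (hB x hx') (norm_nonneg _) (sub_nonneg.mpr (h3.trans h4))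
      rw [Real.norm_eq_abs, abs_of_nonneg (sub_nonneg.mpr h3)]
      exact sub_le_sub_right h4 c
    have hD : Tendsto (fun t : ℝ => (Ψ (v (-t) M) / v (-t) M - c) * B * |l - l'|)
        atTop (nhds 0) := by
      have := ((hgM.sub_const c).mul_const B).mul_const |l - l'|
      simpa using this
    have hI : Tendsto (fun t : ℝ => ∫ u in l'..l, Ψ (v (-t) u) / v (-t) u * (1 / Ψ u))
        atTop (nhds (c * J)) := by
      rw [tendsto_iff_dist_tendsto_zero]
      refine squeeze_zero (fun t => dist_nonneg) (fun t => ?_) hD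
      rw [Real.dist_eq]
      exact hest t
    have hfin := (Real.continuous_exp.tendsto (c * J)).comp hI
    exact Tendsto.congr (fun t => (key t l hl l' hl').symm) hfin
  · -- ψ0 = ⊥ and l < l'
    intro hb l hl l' hl' hll
    have hJ : (∫ u in l..l', 1 / Ψ u) < 0 := by
      have hpos : 0 < ∫ u in l..l', -(1 / Ψ u) := by
        apply intervalIntegral.integral_pos hll
        · intro x hx
          have hxS : x ∈ S := hSsub hl hl' (by rw [Set.uIcc_of_le hll.le]; exact hx)
          exact ((hconth x hxS).neg).continuousWithinAt
        · intro x hx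
          have hxS : x ∈ S := hSsub hl hl'
            (by rw [Set.uIcc_of_le hll.le]; exact Set.Ioc_subset_Icc_self hx)
          have : 1 / Ψ x < 0 := one_div_neg.mpr (hneg x hxS)
          linarith
        · refine ⟨l, Set.left_mem_Icc.mpr hll.le, ?_⟩
          have : 1 / Ψ l < 0 := one_div_neg.mpr (hneg l hl)
          linarith
      rw [intervalIntegral.integral_neg] at hpos
      linarith
    have hIle : ∀ t : ℝ, (∫ u in l'..l, Ψ (v (-t) u) / v (-t) u * (1 / Ψ u)) ≤
        Ψ (v (-t) l') / v (-t) l' * (-(∫ u in l..l', 1 / Ψ u)) := by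
      intro t
      have hmono := intervalIntegral.integral_mono_on (μ := volume) hll.le
        ((hinth l hl l' hl').const_mul (Ψ (v (-t) l') / v (-t) l'))
        (hintF t l hl l' hl') ?_
      · rw [intervalIntegral.integral_const_mul] at hmono
        rw [intervalIntegral.integral_symm l l']
        linarith
      · intro x hx
        have hxS : x ∈ S := hSsub hl hl' (by rw [Set.uIcc_of_le hll.le]; exact hx)
        have h1 : Ψ (v (-t) x) / v (-t) x ≤ Ψ (v (-t) l') / v (-t) l' :=
          gmono (hvpos (-t) x hxS) (hvmono (-t) x hxS l' hl' hx.2)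
        have h2 : 1 / Ψ x ≤ 0 := (one_div_neg.mpr (hneg x hxS)).le
        exact mul_le_mul_of_nonpos_right h1 h2
    have hbnd : Tendsto (fun t : ℝ => Ψ (v (-t) l') / v (-t) l' * (-(∫ u in l..l', 1 / Ψ u)))
        atTop atBot :=
      (hbotreal hb l' hl').atBot_mul_const (by linarith)
    have hI : Tendsto (fun t : ℝ => ∫ u in l'..l, Ψ (v (-t) u) / v (-t) u * (1 / Ψ u))
        atTop atBot := tendsto_atBot_mono hIle hbnd
    have hfin := Real.tendsto_exp_atBot.comp hI
    exact Tendsto.congr (fun t => (key t l hl l' hl').symm) hfin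
  · -- ψ0 = ⊥ and l' < l
    intro hb l hl l' hl' hll
    have hJ : (∫ u in l'..l, 1 / Ψ u) < 0 := by
      have hpos : 0 < ∫ u in l'..l, -(1 / Ψ u) := by
        apply intervalIntegral.integral_pos hll
        · intro x hx
          have hxS : x ∈ S := hSsub hl' hl (by rw [Set.uIcc_of_le hll.le]; exact hx)
          exact ((hconth x hxS).neg).continuousWithinAt
        · intro x hx
          have hxS : x ∈ S := hSsub hl' hl
            (by rw [Set.uIcc_of_le hll.le]; exact Set.Ioc_subset_Icc_self hx)
          have : 1 / Ψ x < 0 := one_div_neg.mpr (hneg x hxS)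
          linarith
        · refine ⟨l', Set.left_mem_Icc.mpr hll.le, ?_⟩
          have : 1 / Ψ l' < 0 := one_div_neg.mpr (hneg l' hl')
          linarith
      rw [intervalIntegral.integral_neg] at hpos
      linarith
    have hIge : ∀ t : ℝ, Ψ (v (-t) l) / v (-t) l * (∫ u in l'..l, 1 / Ψ u) ≤
        (∫ u in l'..l, Ψ (v (-t) u) / v (-t) u * (1 / Ψ u)) := by
      intro t
      have hmono := intervalIntegral.integral_mono_on (μ := volume) hll.le
        ((hinth l' hl' l hl).const_mul (Ψ (v (-t) l) / v (-t) l))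
        (hintF t l' hl' l hl) ?_
      · rw [intervalIntegral.integral_const_mul] at hmono
        exact hmono
      · intro x hx
        have hxS : x ∈ S := hSsub hl' hl (by rw [Set.uIcc_of_le hll.le]; exact hx)
        have h1 : Ψ (v (-t) x) / v (-t) x ≤ Ψ (v (-t) l) / v (-t) l :=
          gmono (hvpos (-t) x hxS) (hvmono (-t) x hxS l hl hx.2)
        have h2 : 1 / Ψ x ≤ 0 := (one_div_neg.mpr (hneg x hxS)).le
        exact mul_le_mul_of_nonpos_right h1 h2
    have hbnd : Tendsto (fun t : ℝ => Ψ (v (-t) l) / v (-t) l * (∫ u in l'..l, 1 / Ψ u))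
        atTop atTop :=
      (hbotreal hb l hl).atBot_mul_const_of_neg hJ
    have hI : Tendsto (fun t : ℝ => ∫ u in l'..l, Ψ (v (-t) u) / v (-t) u * (1 / Ψ u))
        atTop atTop := tendsto_atTop_mono hIge hbnd
    have hfin := Real.tendsto_exp_atTop.comp hI
    exact Tendsto.congr (fun t => (key t l hl l' hl').symm) hfin
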